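/- Let 0 < a ≤ b be real numbers and set κ = b/a. For every natural number k there exists a polynomial p with real coefficients such that deg p ≤ k, p(0) = 1, and |p(λ)| ≤ 2·((√κ − 1)/(√κ + 1))^k for all λ ∈ [a, b]. -/

import Mathlib

open Polynomial Polynomial.Chebyshev

lemma natDegree_T_le : ∀ k : ℕ, (T ℝ (k:ℤ)).natDegree ≤ k := by
  intro k
  induction k using Nat.twoStepInduction with
  | zero => simp
  | one => simp
  | more n ih1 ih2 =>
    push_cast
    rw [T_add_two]
    refine le_trans (natDegree_sub_le _ _) (max_le ?_ ?_)
    · refine le_trans (natDegree_mul_le) ?_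
      have h : (2 * X : ℝ[X]).natDegree ≤ 1 := by
        simpa using natDegree_C_mul_le (2:ℝ) X
      have h1 : (T ℝ ((n:ℤ)+1)).natDegree ≤ n + 1 := by exact_mod_cast ih2
      omega
    · have h0 : (T ℝ ((n:ℤ))).natDegree ≤ n := ih1
      omega

lemma T_real_cosh (n : ℤ) (x : ℝ) : (T ℝ n).eval (Real.cosh x) = Real.cosh (n * x) := by
  have h := Polynomial.Chebyshev.complex_ofReal_eval_T (Real.cosh x) n
  have h2 : ((Real.cosh x : ℝ) : ℂ) = Complex.cos ((x:ℂ) * Complex.I) := by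
    rw [Complex.cos_mul_I, Complex.ofReal_cosh]
  have h3 := Polynomial.Chebyshev.T_complex_cos ((x:ℂ) * Complex.I) n
  have key : ((((T ℝ n).eval (Real.cosh x)) : ℝ) : ℂ) = ((Real.cosh ((n:ℝ) * x) : ℝ) : ℂ) := by
    rw [h, h2, h3,
      show ((n:ℂ)*((x:ℂ)*Complex.I)) = (((n:ℝ)*x : ℝ) : ℂ) * Complex.I by push_cast; ring,
      Complex.cos_mul_I, Complex.ofReal_cosh]
  exact_mod_cast key


/-- Chebyshev min–max bound: for `0 < a ≤ b` with `κ = b/a` and every `k`,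
there is a real polynomial `p` of degree at most `k` with `p(0) = 1` and
`|p(λ)| ≤ 2·((√κ − 1)/(√κ + 1))^k` on `[a, b]`. -/
theorem chebyshev_minimax_bound
    (a b : ℝ) (ha : 0 < a) (hab : a ≤ b) (κ : ℝ) (hκ : κ = b / a) (k : ℕ) :
    ∃ p : Polynomial ℝ, p.natDegree ≤ k ∧ p.eval 0 = 1 ∧
      ∀ lam ∈ Set.Icc a b,
        |p.eval lam| ≤ 2 * ((Real.sqrt κ - 1) / (Real.sqrt κ + 1)) ^ k := by
  rcases eq_or_lt_of_le hab with heq | hlt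
  · -- degenerate case a = b
    subst heq
    have hκ1 : κ = 1 := by rw [hκ, div_self ha.ne']
    have hs1 : Real.sqrt κ = 1 := by rw [hκ1, Real.sqrt_one]
    cases k with
    | zero =>
      exact ⟨1, by simp, by simp, by intro lam _; norm_num⟩
    | succ n =>
      refine ⟨1 - C a⁻¹ * X, ?_, ?_, ?_⟩
      · refine le_trans (natDegree_sub_le _ _) ?_
        simp [natDegree_C_mul_le]
        exact le_trans (natDegree_C_mul_le _ _) (by simp)
      · simp
      · intro lam hl
        have hla : lam = a := le_antisymm hl.2 hl.1
        subst hla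
        rw [hs1]
        simp [inv_mul_cancel₀ ha.ne']
  · -- main case a < b
    have hba : (0:ℝ) < b - a := by linarith
    have hb : (0:ℝ) < b := lt_trans ha hlt
    set sa := Real.sqrt a with hsa
    set sb := Real.sqrt b with hsb
    have hsa0 : 0 < sa := Real.sqrt_pos.mpr ha
    have hsb0 : 0 < sb := Real.sqrt_pos.mpr hb
    have hsalt : sa < sb := Real.sqrt_lt_sqrt ha.le hlt
    have ha2 : a = sa ^ 2 := (Real.sq_sqrt ha.le).symm
    have hb2 : b = sb ^ 2 := (Real.sq_sqrt hb.le).symm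
    have hsκ : Real.sqrt κ = sb / sa := by
      rw [hκ, Real.sqrt_div' b ha.le]
    have hsum : (0:ℝ) < sb + sa := by linarith
    have hdif : (0:ℝ) < sb - sa := by linarith
    set r : ℝ := (sb - sa) / (sb + sa) with hrdef
    have hr0 : 0 < r := div_pos hdif hsum
    have hrκ : (Real.sqrt κ - 1) / (Real.sqrt κ + 1) = r := by
      rw [hsκ, hrdef]
      field_simp
    set t : ℝ := (a + b) / (b - a) with htdef
    set s : ℝ := 2 * sa * sb / (b - a) with hsdef
    have hts1 : t - s = r := by
      rw [htdef, hsdef, hrdef, ha2, hb2]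
      rw [div_sub_div_same, div_eq_div_iff (by nlinarith) hsum.ne']
      ring
    have hts2 : t + s = r⁻¹ := by
      rw [htdef, hsdef, hrdef, ha2, hb2, inv_div]
      rw [← add_div, div_eq_div_iff (by nlinarith) hdif.ne']
      ring
    have htspos : 0 < t + s := by rw [hts2]; positivity
    set x : ℝ := Real.log (t + s) with hxdef
    have hexp : Real.exp x = t + s := Real.exp_log htspos
    have hmul1 : (t + s) * (t - s) = 1 := by
      rw [hts1, hts2, inv_mul_cancel₀ hr0.ne']
    have hexpneg : Real.exp (-x) = t - s := by
      rw [Real.exp_neg, hexp]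
      field_simp
      linarith [hmul1]
    have hcosh : Real.cosh x = t := by
      rw [Real.cosh_eq, hexp, hexpneg]; ring
    set M : ℝ := Real.cosh ((k:ℝ) * x) with hMdef
    have hTt : (T ℝ (k:ℤ)).eval t = M := by
      rw [← hcosh, _root_.T_real_cosh]
      norm_num [hMdef]
    have hMge : r⁻¹ ^ k / 2 ≤ M := by
      have h1 : Real.exp ((k:ℝ) * x) = (t + s) ^ k := by
        rw [Real.exp_nat_mul, hexp]
      have h2 : 0 < Real.exp (-((k:ℝ) * x)) := Real.exp_pos _
      rw [hMdef, Real.cosh_eq, h1, hts2]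
      nlinarith
    have hM0 : 0 < M := lt_of_lt_of_le (by positivity) hMge
    have hMinv : M⁻¹ ≤ 2 * r ^ k := by
      have := inv_anti₀ (by positivity : (0:ℝ) < r⁻¹ ^ k / 2) hMge
      calc M⁻¹ ≤ (r⁻¹ ^ k / 2)⁻¹ := this
        _ = 2 * r ^ k := by
          rw [inv_div, inv_pow]; field_simp
    set u : ℝ := 2 / (b - a) with hudef
    refine ⟨C M⁻¹ * ((T ℝ (k:ℤ)).comp (C (-u) * X + C t)), ?_, ?_, ?_⟩
    · refine le_trans (natDegree_C_mul_le _ _) ?_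
      refine le_trans (natDegree_comp_le) ?_
      have h1 := natDegree_T_le k
      have h2 : (C (-u) * X + C t).natDegree ≤ 1 := natDegree_linear_le
      calc (T ℝ (k:ℤ)).natDegree * (C (-u) * X + C t).natDegree
          ≤ k * 1 := Nat.mul_le_mul h1 h2
        _ = k := by ring
    · simp [eval_comp, hTt, inv_mul_cancel₀ hM0.ne']
    · intro lam hl
      obtain ⟨hl1, hl2⟩ := hl
      set y : ℝ := -u * lam + t with hydef
      have hy : y = (a + b - 2 * lam) / (b - a) := by
        rw [hydef, hudef, htdef]
        field_simp
        ring
      have hy1 : y ≤ 1 := by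
        rw [hy, div_le_one hba]; linarith
      have hy2 : -1 ≤ y := by
        rw [hy, le_div_iff₀ hba]; linarith
      have hyc : Real.cos (Real.arccos y) = y := Real.cos_arccos hy2 hy1
      have hT : (T ℝ (k:ℤ)).eval y = Real.cos (((k:ℤ):ℝ) * Real.arccos y) := by
        conv_lhs => rw [← hyc]
        exact Polynomial.Chebyshev.T_real_cos _ _
      push_cast at hT
      rw [eval_mul, eval_C, eval_comp]
      simp only [eval_add, eval_mul, eval_C, eval_X]
      rw [← hydef, hT, hrκ, abs_mul, abs_inv, abs_of_pos hM0]
      calc M⁻¹ * |Real.cos ((k:ℝ) * Real.arccos y)|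
          ≤ M⁻¹ * 1 := by
            exact mul_le_mul_of_nonneg_left (Real.abs_cos_le_one _) (by positivity)
        _ = M⁻¹ := mul_one _
        _ ≤ 2 * r ^ k := hMinv
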